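/- For all natural numbers n and k with 1 < k and k² ≤ n, there is no nonempty symmetric intersecting family of k-element subsets of {1,...,n}; equivalently, s(n,k) = 0 whenever 1 < k ≤ √n. -/
import Mathlib


open scoped Classical

/-- A family of finite sets is intersecting if any two of its members meet. -/
def IsIntersecting {α : Type*} [DecidableEq α] (A : Finset (Finset α)) : Prop :=
  ∀ x ∈ A, ∀ y ∈ A, (x ∩ y).Nonempty

/-- A family of finite sets is symmetric if its automorphism group is transitive:
for all `i j` there is a permutation `σ` with `σ(𝒜) = 𝒜` and `σ i = j`. -/
def IsSymmetricFam {α : Type*} [DecidableEq α] (A : Finset (Finset α)) : Prop :=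
  ∀ i j : α, ∃ σ : Equiv.Perm α, A.image (fun x => x.image σ) = A ∧ σ i = j

/-- `s(n,k)`: the maximum size of a symmetric intersecting family of `k`-element
subsets of `[n]` (the maximum over the empty collection being `0`). -/
noncomputable def symIntMax (n k : ℕ) : ℕ :=
  sSup {m | ∃ A : Finset (Finset (Fin n)),
    (∀ x ∈ A, x.card = k) ∧ IsSymmetricFam A ∧ IsIntersecting A ∧ A.card = m}

/-- For `1 < k` with `k² ≤ n`, every symmetric intersecting family of `k`-element
subsets of `[n]` is empty; equivalently `s(n,k) = 0` whenever `1 < k ≤ √n`. -/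
theorem no_symmetric_intersecting_of_small_k (n k : ℕ) (h1 : 1 < k) (h2 : k ^ 2 ≤ n) :
    (∀ A : Finset (Finset (Fin n)), (∀ x ∈ A, x.card = k) →
      IsSymmetricFam A → IsIntersecting A → A = ∅) ∧
    symIntMax n k = 0 := by
  have hn : 0 < n := lt_of_lt_of_le (by nlinarith) h2
  have main : ∀ A : Finset (Finset (Fin n)), (∀ x ∈ A, x.card = k) →
      IsSymmetricFam A → IsIntersecting A → A = ∅ := by
    intro A hcard hsym hint
    by_contra hne
    obtain ⟨S, hS⟩ := Finset.nonempty_iff_ne_empty.2 hne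
    set d : Fin n → ℕ := fun i => (A.filter (fun T => i ∈ T)).card with hd
    have deq : ∀ i j : Fin n, d i = d j := by
      intro i j
      obtain ⟨σ, hσA, hσi⟩ := hsym i j
      have hfil : A.filter (fun T => j ∈ T)
          = (A.filter (fun T => i ∈ T)).image (fun T => T.image σ) := by
        ext T'
        simp only [Finset.mem_image, Finset.mem_filter]
        constructor
        · rintro ⟨hT'A, hjT'⟩
          rw [← hσA] at hT'A
          obtain ⟨T, hTA, rfl⟩ := Finset.mem_image.1 hT'A
          refine ⟨T, ⟨hTA, ?_⟩, rfl⟩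
          rw [← hσi] at hjT'
          obtain ⟨x, hx, hxe⟩ := Finset.mem_image.1 hjT'
          rwa [σ.injective hxe] at hx
        · rintro ⟨T, ⟨hTA, hiT⟩, rfl⟩
          refine ⟨?_, ?_⟩
          · rw [← hσA]; exact Finset.mem_image_of_mem _ hTA
          · rw [← hσi]; exact Finset.mem_image_of_mem _ hiT
      simp only [hd]
      rw [hfil, Finset.card_image_of_injective _
        (Finset.image_injective σ.injective)]
    set D := d ⟨0, hn⟩ with hD
    have hdD : ∀ i : Fin n, d i = D := fun i => deq i _
    -- identity 1 : n * D = |A| * k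
    have hsum1 : n * D = A.card * k := by
      have e1 : ∑ j : Fin n, d j = ∑ T ∈ A, T.card := by
        simp only [hd, Finset.card_filter]
        rw [Finset.sum_comm]
        refine Finset.sum_congr rfl fun T hT => ?_
        rw [← Finset.card_filter, Finset.filter_univ_mem]
      have e2 : ∑ j : Fin n, d j = n * D := by
        simp [hdD, Finset.sum_const, Finset.card_univ, mul_comm]
      have e3 : ∑ T ∈ A, T.card = A.card * k := by
        rw [Finset.sum_congr rfl hcard, Finset.sum_const, smul_eq_mul]
      rw [← e2, e1, e3]
    -- identity 2 : k * D = ∑ T ∈ A, (T ∩ S).card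
    have hsum2 : k * D = ∑ T ∈ A, (T ∩ S).card := by
      have e1 : ∑ x ∈ S, d x = ∑ T ∈ A, (T ∩ S).card := by
        simp only [hd, Finset.card_filter]
        rw [Finset.sum_comm]
        refine Finset.sum_congr rfl fun T hT => ?_
        rw [← Finset.card_filter]
        congr 1
        ext x
        simp [Finset.mem_inter, and_comm]
      have e2 : ∑ x ∈ S, d x = k * D := by
        rw [Finset.sum_congr rfl (fun x _ => hdD x), Finset.sum_const,
          smul_eq_mul, hcard S hS]
      rw [← e2, e1]
    -- lower bound
    have hlb : A.card + (k - 1) ≤ ∑ T ∈ A, (T ∩ S).card := by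
      have hsplit : ∑ T ∈ A.erase S, (T ∩ S).card + (S ∩ S).card
          = ∑ T ∈ A, (T ∩ S).card := Finset.sum_erase_add A _ hS
      have hSS : (S ∩ S).card = k := by rw [Finset.inter_self]; exact hcard S hS
      have hone : A.card - 1 ≤ ∑ T ∈ A.erase S, (T ∩ S).card := by
        calc A.card - 1 = (A.erase S).card := (Finset.card_erase_of_mem hS).symm
          _ = ∑ T ∈ A.erase S, 1 := by rw [Finset.sum_const, smul_eq_mul, mul_one]
          _ ≤ ∑ T ∈ A.erase S, (T ∩ S).card := by
              refine Finset.sum_le_sum fun T hT => ?_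
              exact Finset.card_pos.2 (hint T (Finset.mem_of_mem_erase hT) S hS)
      have hA1 : 1 ≤ A.card := Finset.card_pos.2 ⟨S, hS⟩
      omega
    have hA1 : 1 ≤ A.card := Finset.card_pos.2 ⟨S, hS⟩
    have hkD : A.card + 1 ≤ k * D := by omega
    -- combine
    have h5 : n * (A.card + 1) ≤ n * (k * D) := Nat.mul_le_mul_left n hkD
    have h6 : n * (k * D) = k * (A.card * k) := by
      rw [← hsum1]; ring
    nlinarith [Nat.mul_le_mul_left A.card h2]
  refine ⟨main, ?_⟩
  have hset : {m | ∃ A : Finset (Finset (Fin n)),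
      (∀ x ∈ A, x.card = k) ∧ IsSymmetricFam A ∧ IsIntersecting A ∧ A.card = m} = {0} := by
    ext m
    simp only [Set.mem_setOf_eq, Set.mem_singleton_iff]
    constructor
    · rintro ⟨A, hc, hs, hi, rfl⟩
      rw [main A hc hs hi, Finset.card_empty]
    · rintro rfl
      refine ⟨∅, by simp, fun i j => ⟨Equiv.swap i j, by simp, Equiv.swap_apply_left i j⟩,
        fun x hx => by simp at hx, by simp⟩
  rw [symIntMax, hset, csSup_singleton]
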